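/- arXiv:2111.10529 — 13 statements merged into one kernel-verified Lean document; each statement's English description precedes it below -/
import Mathlib

section
/- Let (K(x)|K,v) be a valued field extension and c ∈ K. Then there exists c' ∈ K with v(x−c') > v(x−c) if and only if there exists d ∈ K with v(d(x−c)) = 0 and the residue of d(x−c) lies in the residue field Kv. -/
variable {L : Type*} [Field L] {Γ : Type*} [AddCommGroup Γ] [LinearOrder Γ] [IsOrderedAddMonoid Γ]

/-- The residue of `a` (an element of value `0`) lies in the residue field `Kv`:
`a` is congruent, modulo elements of positive value, to an element of `K`. -/
def residueInK (K : Subfield L) (v : AddValuation L (WithTop Γ)) (a : L) : Prop :=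
  ∃ b ∈ K, 0 < v (a - b)

/-- For an extension `(K(x)|K,v)` and `c ∈ K`: there is `c' ∈ K` with
`v(x−c') > v(x−c)` iff there is `d ∈ K` with `v(d(x−c)) = 0` and the residue of
`d(x−c)` lying in `Kv`. -/
theorem approx_iff_residue_in_K (K : Subfield L) (v : AddValuation L (WithTop Γ))
    (x c : L) (hc : c ∈ K) :
    (∃ c' ∈ K, v (x - c) < v (x - c')) ↔
      ∃ d ∈ K, v (d * (x - c)) = 0 ∧ residueInK K v (d * (x - c)) := by
  constructor
  · rintro ⟨c', hc', hlt⟩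
    -- the difference e = c' - c has the same value as x - c
    set e : L := c' - c with he
    have hve : v e = v (x - c) := by
      have : e = (x - c) - (x - c') := by ring
      rw [this, AddValuation.map_sub_eq_of_lt_left v hlt]
    have hne_top : v (x - c) ≠ ⊤ := (hlt.trans_le le_top).ne
    obtain ⟨g, hg⟩ : ∃ g : Γ, v (x - c) = (g : WithTop Γ) := by
      cases h : v (x - c) with
      | top => exact absurd h hne_top
      | coe g => exact ⟨g, rfl⟩
    have he0 : e ≠ 0 := by
      intro h
      rw [h, AddValuation.map_zero] at hve
      exact hne_top hve.symm
    refine ⟨e⁻¹, K.inv_mem (K.sub_mem hc' hc), ?_, ?_⟩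
    · rw [AddValuation.map_mul, AddValuation.map_inv, hve, hg, ← WithTop.LinearOrderedAddCommGroup.coe_neg,
        ← WithTop.coe_add, neg_add_cancel, WithTop.coe_zero]
    · refine ⟨1, K.one_mem, ?_⟩
      have hkey : e⁻¹ * (x - c) - 1 = e⁻¹ * (x - c') := by
        field_simp
        ring
      rw [hkey, AddValuation.map_mul, AddValuation.map_inv, hve, hg, ← WithTop.LinearOrderedAddCommGroup.coe_neg]
      calc (0 : WithTop Γ) = (-g : Γ) + (g : WithTop Γ) := by
            rw [← WithTop.coe_add, neg_add_cancel, WithTop.coe_zero]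
        _ < ((-g : Γ) : WithTop Γ) + v (x - c') := by
            exact WithTop.add_lt_add_left (WithTop.coe_ne_top) (hg ▸ hlt)
  · rintro ⟨d, hd, h0, b, hb, hpos⟩
    have hd0 : d ≠ 0 := by
      intro h
      rw [h, zero_mul, AddValuation.map_zero] at h0
      exact (WithTop.top_ne_zero) h0
    obtain ⟨g, hg⟩ : ∃ g : Γ, v d = (g : WithTop Γ) := by
      cases h : v d with
      | top => exact absurd ((v.top_iff).mp h) hd0
      | coe g => exact ⟨g, rfl⟩
    refine ⟨c + b / d, K.add_mem hc (K.div_mem hb hd), ?_⟩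
    have hkey : x - (c + b / d) = d⁻¹ * (d * (x - c) - b) := by
      field_simp
      ring
    have hxc : x - c = d⁻¹ * (d * (x - c)) := by
      field_simp
    rw [hkey, AddValuation.map_mul, AddValuation.map_inv, hg, ← WithTop.LinearOrderedAddCommGroup.coe_neg]
    calc v (x - c) = ((-g : Γ) : WithTop Γ) + v (d * (x - c)) := by
          rw [WithTop.LinearOrderedAddCommGroup.coe_neg, ← hg, ← AddValuation.map_inv v,
            ← AddValuation.map_mul, ← hxc]
      _ = ((-g : Γ) : WithTop Γ) + 0 := by rw [h0]
      _ < ((-g : Γ) : WithTop Γ) + v (d * (x - c) - b) :=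
          WithTop.add_lt_add_left (WithTop.coe_ne_top) hpos
end

section
/- Let (L|K,v) be a valued field extension and x ∈ L. Then: (1) the set v(x−K) ∩ vK is an initial segment of vK; (2) the set v(x−K) \ vK has at most one element; (3) if α ∈ v(x−K) \ vK, then α = max v(x−K) and v(x−K) ∩ vK = {γ ∈ vK : γ < α}. -/
variable {L : Type*} [Field L] {Γ : Type*} [AddCommGroup Γ] [LinearOrder Γ] [IsOrderedAddMonoid Γ]

/-- The set of values `v(K)` (it contains `∞ = ⊤`, the value of `0`). -/
def valSet (K : Subfield L) (v : AddValuation L (WithTop Γ)) : Set (WithTop Γ) :=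
  {g | ∃ c ∈ K, v c = g}

/-- The set `v(x−K) = {v(x−c) : c ∈ K}`. -/
def vxK (K : Subfield L) (v : AddValuation L (WithTop Γ)) (x : L) : Set (WithTop Γ) :=
  {g | ∃ c ∈ K, v (x - c) = g}

/-- (1) `v(x−K) ∩ vK` is an initial segment of `vK`; (2) `v(x−K) \ vK` has at most
one element; (3) if `α ∈ v(x−K) \ vK` then `α = max v(x−K)` and
`v(x−K) ∩ vK = {γ ∈ vK : γ < α}`. -/
theorem vxK_structure (K : Subfield L) (v : AddValuation L (WithTop Γ)) (x : L) :
    (∀ δ ∈ vxK K v x ∩ valSet K v, ∀ α ∈ valSet K v, α ≤ δ → α ∈ vxK K v x ∩ valSet K v) ∧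
    (vxK K v x \ valSet K v).Subsingleton ∧
    (∀ α ∈ vxK K v x \ valSet K v,
      (∀ β ∈ vxK K v x, β ≤ α) ∧
      vxK K v x ∩ valSet K v = {γ | γ ∈ valSet K v ∧ γ < α}) := by
  -- Key construction: if γ = v e < v (x - c), then v (x - (c+e)) = γ.
  have key : ∀ c ∈ K, ∀ e ∈ K, v e < v (x - c) → v (x - (c + e)) = v e := by
    intro c hc e he hlt
    have hx : x - (c + e) = (x - c) - e := by ring
    rw [hx, v.map_sub_eq_of_lt_right hlt]
  -- Maximality: if α ∈ v(x-K) \ vK, then α is an upper bound of v(x-K).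
  have hmax : ∀ α ∈ vxK K v x \ valSet K v, ∀ β ∈ vxK K v x, β ≤ α := by
    rintro α ⟨⟨c, hc, hcα⟩, hα⟩ β ⟨d, hd, hdβ⟩
    by_contra hlt
    push_neg at hlt
    apply hα
    refine ⟨c - d, K.sub_mem hc hd, ?_⟩
    have hx : (c : L) - d = (x - d) - (x - c) := by ring
    rw [hx, v.map_sub_eq_of_lt_right (by rw [hcα, hdβ]; exact hlt), hcα]
  refine ⟨?_, ?_, ?_⟩
  · -- (1) initial segment
    rintro δ ⟨⟨c, hc, hcδ⟩, hδK⟩ α ⟨e, he, heα⟩ hle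
    rcases eq_or_lt_of_le hle with rfl | hlt
    · exact ⟨⟨c, hc, hcδ⟩, ⟨e, he, heα⟩⟩
    · refine ⟨⟨c + e, K.add_mem hc he, ?_⟩, ⟨e, he, heα⟩⟩
      rw [key c hc e he (by rw [heα, hcδ]; exact hlt), heα]
  · -- (2) subsingleton
    intro a ha b hb
    exact le_antisymm (hmax b hb a ha.1) (hmax a ha b hb.1)
  · -- (3)
    intro α hα
    refine ⟨hmax α hα, ?_⟩
    ext γ
    constructor
    · rintro ⟨hγx, hγK⟩
      refine ⟨hγK, lt_of_le_of_ne (hmax α hα γ hγx) ?_⟩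
      rintro rfl
      exact hα.2 hγK
    · rintro ⟨⟨e, he, heγ⟩, hlt⟩
      obtain ⟨⟨c, hc, hcα⟩, -⟩ := hα
      refine ⟨⟨c + e, K.add_mem hc he, ?_⟩, ⟨e, he, heγ⟩⟩
      rw [key c hc e he (by rw [heγ, hcα]; exact hlt), heγ]
end

section
/- Let (L|K,v) be a valued field extension and x ∈ L. Then v(x−c) = max v(x−K) if and only if v(x−c) ∉ vK or for every d ∈ K with v(d(x−c)) = 0 the residue of d(x−c) does not lie in Kv. -/
variable {L : Type*} [Field L] {Γ : Type*} [AddCommGroup Γ] [LinearOrder Γ] [IsOrderedAddMonoid Γ]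

/-- `v(x−c) = max v(x−K)` iff `v(x−c) ∉ vK` or for every `d ∈ K` with
`v(d(x−c)) = 0` the residue of `d(x−c)` does not lie in `Kv`. -/
theorem max_vxK_iff (K : Subfield L) (v : AddValuation L (WithTop Γ)) (x c : L) (hc : c ∈ K) :
    (∀ β ∈ vxK K v x, β ≤ v (x - c)) ↔
      (v (x - c) ∉ valSet K v ∨
        ∀ d ∈ K, v (d * (x - c)) = 0 → ¬ residueInK K v (d * (x - c))) := by
  constructor
  · intro h
    right
    intro d hd hd0
    rintro ⟨b, hb, hbv⟩
    have hd0' : d ≠ 0 := by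
      rintro rfl
      simp at hd0
    have hdt : v d⁻¹ ≠ ⊤ := (AddValuation.ne_top_iff v).mpr (inv_ne_zero hd0')
    have key : v (x - c) < v (x - (c + b * d⁻¹)) := by
      have e : x - (c + b * d⁻¹) = d⁻¹ * (d * (x - c) - b) := by
        field_simp
        ring
      have e2 : x - c = d⁻¹ * (d * (x - c)) := by
        field_simp
      calc v (x - c) = v d⁻¹ + v (d * (x - c)) := by rw [← AddValuation.map_mul, ← e2]
        _ = v d⁻¹ + 0 := by rw [hd0]
        _ < v d⁻¹ + v (d * (x - c) - b) := WithTop.add_lt_add_left hdt hbv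
        _ = v (x - (c + b * d⁻¹)) := by rw [← AddValuation.map_mul, ← e]
    exact absurd
      (h _ ⟨c + b * d⁻¹, K.add_mem hc (K.mul_mem hb (K.inv_mem hd)), rfl⟩)
      (not_le.mpr key)
  · rintro hR β ⟨c', hc', rfl⟩
    by_contra hlt
    push_neg at hlt
    have hne : c' - c ≠ 0 := by
      intro h0
      rw [sub_eq_zero] at h0
      subst h0
      exact lt_irrefl _ hlt
    have hvcc : v (c' - c) = v (x - c) := by
      have e : c' - c = (x - c) - (x - c') := by ring
      rw [e, AddValuation.map_sub_eq_of_lt_left _ hlt]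
    rcases hR with hnot | hres
    · exact hnot ⟨c' - c, K.sub_mem hc' hc, hvcc⟩
    · have hdK : (c' - c)⁻¹ ∈ K := K.inv_mem (K.sub_mem hc' hc)
      have hdt : v (c' - c)⁻¹ ≠ ⊤ := (AddValuation.ne_top_iff v).mpr (inv_ne_zero hne)
      have h0 : v ((c' - c)⁻¹ * (x - c)) = 0 := by
        rw [AddValuation.map_mul, ← hvcc, ← AddValuation.map_mul,
          inv_mul_cancel₀ hne, AddValuation.map_one]
      apply hres _ hdK h0
      refine ⟨1, K.one_mem, ?_⟩
      have e : (c' - c)⁻¹ * (x - c) - 1 = (c' - c)⁻¹ * (x - c') := by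
        field_simp
        ring
      calc (0 : WithTop Γ) = v ((c' - c)⁻¹ * (x - c)) := h0.symm
        _ = v (c' - c)⁻¹ + v (x - c) := AddValuation.map_mul v _ _
        _ < v (c' - c)⁻¹ + v (x - c') := WithTop.add_lt_add_left hdt hlt
        _ = v ((c' - c)⁻¹ * (x - c')) := (AddValuation.map_mul v _ _).symm
        _ = v ((c' - c)⁻¹ * (x - c) - 1) := by rw [e]
end

section
/- Let (L|K,v) be a valued field extension and x ∈ L such that v(x−K) has no maximal element. Then the following are equivalent for y ∈ L: (a) v(x−y) > γ for all γ ∈ v(x−K); (b) v(x−y) ≥ γ for all γ ∈ v(x−K); (c) v(x−c) = v(y−c) for all c ∈ K. -/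
variable {L : Type*} [Field L] {Γ : Type*} [AddCommGroup Γ] [LinearOrder Γ] [IsOrderedAddMonoid Γ]

/-- If `v(x−K)` has no maximal element, then the following are equivalent:
(a) `v(x−y) > γ` for all `γ ∈ v(x−K)`; (b) `v(x−y) ≥ γ` for all `γ ∈ v(x−K)`;
(c) `v(x−c) = v(y−c)` for all `c ∈ K`. -/
theorem no_max_tfae (K : Subfield L) (v : AddValuation L (WithTop Γ)) (x y : L)
    (hnomax : ∀ c ∈ K, ∃ c' ∈ K, v (x - c) < v (x - c')) :
    ((∀ c ∈ K, v (x - c) < v (x - y)) ↔ (∀ c ∈ K, v (x - c) ≤ v (x - y))) ∧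
    ((∀ c ∈ K, v (x - c) ≤ v (x - y)) ↔ (∀ c ∈ K, v (x - c) = v (y - c))) := by
  have hba : (∀ c ∈ K, v (x - c) ≤ v (x - y)) → ∀ c ∈ K, v (x - c) < v (x - y) := by
    intro hb c hc
    obtain ⟨c', hc', h⟩ := hnomax c hc
    exact lt_of_lt_of_le h (hb c' hc')
  refine ⟨⟨fun ha c hc => (ha c hc).le, hba⟩, ⟨fun hb c hc => ?_, fun hc c hcK => ?_⟩⟩
  · have ha := hba hb c hc
    have : v (y - c) = min (v (y - x)) (v (x - c)) := by
      have hne : v (y - x) ≠ v (x - c) := by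
        rw [v.map_sub_swap y x]; exact (ne_of_gt ha)
      have := v.map_add_of_distinct_val hne
      rwa [show y - x + (x - c) = y - c by ring] at this
    rw [this, v.map_sub_swap y x, min_eq_right ha.le]
  · have h1 : min (v (x - c)) (v (y - c)) ≤ v (x - y) := by
      have := v.map_sub (x - c) (y - c)
      rwa [show x - c - (y - c) = x - y by ring] at this
    rw [← hc c hcK, min_self] at h1
    exact h1
end

section
/- Let (L|K,v) and (L(x)|L,v) be valued field extensions with vL = vK. If v(x−K) ≠ v(x−L), then there exists y ∈ L with v(x−y) > γ for all γ ∈ v(x−K), and v(x−K) = v(y−K). -/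
variable {M : Type*} [Field M] {Γ : Type*} [AddCommGroup Γ] [LinearOrder Γ] [IsOrderedAddMonoid Γ]

def vxS (v : AddValuation M (WithTop Γ)) (x : M) (S : Set M) : Set (WithTop Γ) :=
  {g | ∃ c ∈ S, v (x - c) = g}

/-- Extensions `(L|K,v)` and `(L(x)|L,v)` with `vL = vK`: if `v(x−K) ≠ v(x−L)`,
then there is `y ∈ L` with `v(x−y) > γ` for all `γ ∈ v(x−K)`, and
`v(x−K) = v(y−K)`. -/
theorem exists_y_of_vxK_ne_vxL (K L : Subfield M) (hKL : K ≤ L)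
    (v : AddValuation M (WithTop Γ)) (x : M)
    (hval : ∀ g : WithTop Γ, (∃ c ∈ L, v c = g) → ∃ c ∈ K, v c = g)
    (hne : vxS v x (K : Set M) ≠ vxS v x (L : Set M)) :
    ∃ y ∈ L, (∀ c ∈ K, v (x - c) < v (x - y)) ∧
      vxS v x (K : Set M) = vxS v y (K : Set M) := by
  -- since v(x−K) ⊆ v(x−L) and they differ, pick y ∈ L with v(x−y) ∉ v(x−K)
  have hsub : vxS v x (K : Set M) ⊆ vxS v x (L : Set M) := by
    rintro g ⟨c, hc, rfl⟩
    exact ⟨c, hKL hc, rfl⟩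
  obtain ⟨g, hgL, hgK⟩ : ∃ g, g ∈ vxS v x (L : Set M) ∧ g ∉ vxS v x (K : Set M) := by
    by_contra h
    push_neg at h
    exact hne (le_antisymm hsub h)
  obtain ⟨y, hyL, hy⟩ := hgL
  subst hy
  -- main claim : for all c ∈ K, v(x−c) < v(x−y)
  have hlt : ∀ c ∈ K, v (x - c) < v (x - y) := by
    intro c hc
    rcases lt_trichotomy (v (x - c)) (v (x - y)) with h | h | h
    · exact h
    · exact absurd ⟨c, hc, h⟩ hgK
    · -- v(x−y) < v(x−c): derive contradiction
      exfalso
      have hyc : v (y - c) = v (x - y) := by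
        have : v (y - x) < v (x - c) := by rwa [v.map_sub_swap y x]
        calc v (y - c) = v ((y - x) + (x - c)) := by ring_nf
          _ = v (y - x) := v.map_add_eq_of_lt_left this
          _ = v (x - y) := v.map_sub_swap y x
      obtain ⟨c', hc', hvc'⟩ := hval _ ⟨y - c, sub_mem hyL (hKL hc), hyc⟩
      have : v (x - (c + c')) = v (x - y) := by
        have h1 : v c' < v (x - c) := by rwa [hvc']
        calc v (x - (c + c')) = v ((x - c) - c') := by ring_nf
          _ = v c' := v.map_sub_eq_of_lt_right h1
          _ = v (x - y) := hvc'
      exact hgK ⟨c + c', add_mem hc hc', this⟩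
  refine ⟨y, hyL, hlt, ?_⟩
  have key : ∀ c ∈ K, v (y - c) = v (x - c) := by
    intro c hc
    calc v (y - c) = v ((y - x) + (x - c)) := by ring_nf
      _ = v (x - c) := by
          refine v.map_add_eq_of_lt_right ?_
          rw [v.map_sub_swap y x]
          exact hlt c hc
  ext g
  constructor
  · rintro ⟨c, hc, rfl⟩
    exact ⟨c, hc, key c hc⟩
  · rintro ⟨c, hc, rfl⟩
    exact ⟨c, hc, (key c hc).symm⟩
end

section
/- Let Γ be an ordered abelian group and α an element of an ordered abelian group extension with α ∉ Γ. If Γ is divisible, or α > γ for all γ ∈ Γ, or α < γ for all γ ∈ Γ, then the ordering on the group Γ ⊕ ℤα is uniquely determined by the cut that α induces in Γ (i.e., by the sets {γ ∈ Γ : γ < α} and {γ ∈ Γ : γ > α}). -/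
private lemma pos_zsmul_iff' {G : Type*} [AddCommGroup G] [LinearOrder G] [IsOrderedAddMonoid G]
    {n : ℤ} (hn : 0 < n) (a : G) : 0 < n • a ↔ 0 < a := by
  have h := zsmul_lt_zsmul_iff_right (a := (0:G)) (b := a) hn
  rwa [smul_zero] at h

/-- If `β` is above the image of `g`, then `g γ + n • β` is positive iff `n > 0`
(for `n ≠ 0`). -/
private lemma big_case {Γ H : Type*} [AddCommGroup Γ] [LinearOrder Γ] [IsOrderedAddMonoid Γ]
    [AddCommGroup H] [LinearOrder H] [IsOrderedAddMonoid H] (g : Γ →+ H) (β : H) (hb : ∀ δ : Γ, g δ < β)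
    (γ : Γ) (n : ℤ) (hn : n ≠ 0) : 0 < g γ + n • β ↔ 0 < n := by
  have hβ : 0 < β := (map_zero g) ▸ hb 0
  constructor
  · intro h
    by_contra hle
    have h2 : n • β ≤ (-1 : ℤ) • β := zsmul_le_zsmul_left hβ.le (by omega)
    rw [neg_one_zsmul] at h2
    have h3 : g γ + n • β < β + -β := add_lt_add_of_lt_of_le (hb γ) h2
    rw [add_neg_cancel] at h3
    exact absurd h h3.asymm
  · intro h
    have h2 : (1 : ℤ) • β ≤ n • β := zsmul_le_zsmul_left hβ.le (by omega)
    rw [one_zsmul] at h2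
    have h5 : -(g γ) < β := by
      have := hb (-γ); rwa [map_neg] at this
    have h6 : -(g γ) < n • β := h5.trans_le h2
    rwa [neg_lt_iff_pos_add, add_comm] at h6

/-- If `β` is below the image of `g`, then `g γ + n • β` is positive iff `n < 0`
(for `n ≠ 0`). -/
private lemma small_case {Γ H : Type*} [AddCommGroup Γ] [LinearOrder Γ] [IsOrderedAddMonoid Γ]
    [AddCommGroup H] [LinearOrder H] [IsOrderedAddMonoid H] (g : Γ →+ H) (β : H) (hb : ∀ δ : Γ, β < g δ)
    (γ : Γ) (n : ℤ) (hn : n ≠ 0) : 0 < g γ + n • β ↔ n < 0 := by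
  have hβ : β < 0 := (map_zero g) ▸ hb 0
  constructor
  · intro h
    by_contra hle
    have h2 : (1 : ℤ) • (-β) ≤ n • (-β) := zsmul_le_zsmul_left (by simpa using hβ.le) (by omega)
    rw [one_zsmul, smul_neg, neg_le_neg_iff] at h2
    have h5 : β < -(g γ) := by
      have := hb (-γ); rwa [map_neg] at this
    have h6 : n • β < -(g γ) := h2.trans_lt h5
    have h7 := add_lt_add_right h6 (g γ)
    rw [add_neg_cancel] at h7
    exact absurd h h7.asymm
  · intro h
    have h2 : n • (-β) ≤ (-1 : ℤ) • (-β) := zsmul_le_zsmul_left (by simpa using hβ.le) (by omega)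
    rw [smul_neg, smul_neg, neg_one_zsmul, neg_neg, neg_le] at h2
    have h5 : -(g γ) < -β := neg_lt_neg (hb γ)
    have h6 : -(g γ) < n • β := h5.trans_le h2
    rwa [neg_lt_iff_pos_add, add_comm] at h6

private lemma e_neg {Γ H : Type*} [AddCommGroup Γ] [AddCommGroup H]
    (g : Γ →+ H) (β : H) {m : ℕ} {δ γ : Γ} (hδ : m • δ = γ) :
    g γ + (-(m:ℤ)) • β = (m:ℤ) • (g δ - β) := by
  have h1 : ((m:ℤ)) • g δ = g γ := by rw [natCast_zsmul, ← map_nsmul, hδ]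
  rw [smul_sub, h1, neg_smul]
  abel

private lemma e_pos {Γ H : Type*} [AddCommGroup Γ] [AddCommGroup H]
    (g : Γ →+ H) (β : H) {m : ℕ} {δ γ : Γ} (hδ : m • δ = -γ) :
    g γ + ((m:ℤ)) • β = (m:ℤ) • (β - g δ) := by
  have h1 : ((m:ℤ)) • g δ = -(g γ) := by rw [natCast_zsmul, ← map_nsmul, hδ, map_neg]
  rw [smul_sub, h1]
  abel

/-- Let `Γ` be an ordered abelian group, embedded (order-preservingly) in two
ordered abelian groups `G`, `G'` via `f`, `f'`, and let `α ∈ G`, `α' ∈ G'` with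
`α ∉ Γ`, `α' ∉ Γ`. If `Γ` is divisible, or `α > Γ`, or `α < Γ`, and if `α` and
`α'` induce the same cut in `Γ`, then the orderings on `Γ ⊕ ℤα` and `Γ ⊕ ℤα'`
agree: an element `γ + nα` is positive iff `γ + nα'` is. -/
theorem cut_determines_order {Γ G G' : Type*} [AddCommGroup Γ] [LinearOrder Γ] [IsOrderedAddMonoid Γ]
    [AddCommGroup G] [LinearOrder G] [IsOrderedAddMonoid G]
    [AddCommGroup G'] [LinearOrder G'] [IsOrderedAddMonoid G']
    (f : Γ →+ G) (f' : Γ →+ G') (hf : StrictMono f) (hf' : StrictMono f')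
    (α : G) (α' : G') (hα : α ∉ Set.range f) (hα' : α' ∉ Set.range f')
    (hcase : (∀ n : ℕ, n ≠ 0 → ∀ γ : Γ, ∃ δ : Γ, n • δ = γ) ∨
      (∀ γ : Γ, f γ < α) ∨ (∀ γ : Γ, α < f γ))
    (hcut₁ : ∀ γ : Γ, f γ < α ↔ f' γ < α')
    (hcut₂ : ∀ γ : Γ, α < f γ ↔ α' < f' γ) :
    ∀ (γ : Γ) (n : ℤ), 0 < f γ + n • α ↔ 0 < f' γ + n • α' := by
  intro γ n
  rcases eq_or_ne n 0 with rfl | hn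
  · simp only [zero_smul, add_zero]
    rw [← map_zero f, ← map_zero f', hf.lt_iff_lt, hf'.lt_iff_lt]
  rcases hcase with hdiv | hbig | hsmall
  · -- divisible case
    rcases hn.lt_or_gt with hneg | hpos
    · obtain ⟨m, rfl⟩ : ∃ m : ℕ, n = -(m : ℤ) := ⟨(-n).toNat, by omega⟩
      have hm : (0:ℤ) < (m:ℤ) := by omega
      obtain ⟨δ, hδ⟩ := hdiv m (by omega) γ
      rw [e_neg f α hδ, e_neg f' α' hδ, pos_zsmul_iff' hm, pos_zsmul_iff' hm,
        sub_pos, sub_pos]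
      exact (hcut₂ δ).symm.symm
    · obtain ⟨m, rfl⟩ : ∃ m : ℕ, n = (m : ℤ) := ⟨n.toNat, by omega⟩
      have hm : (0:ℤ) < (m:ℤ) := by omega
      obtain ⟨δ, hδ⟩ := hdiv m (by omega) (-γ)
      rw [e_pos f α hδ, e_pos f' α' hδ, pos_zsmul_iff' hm, pos_zsmul_iff' hm,
        sub_pos, sub_pos]
      exact hcut₁ δ
  · -- α above Γ
    have hbig' : ∀ δ : Γ, f' δ < α' := fun δ => (hcut₁ δ).mp (hbig δ)
    rw [big_case f α hbig γ n hn, big_case f' α' hbig' γ n hn]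
  · -- α below Γ
    have hsmall' : ∀ δ : Γ, α' < f' δ := fun δ => (hcut₂ δ).mp (hsmall δ)
    rw [small_case f α hsmall γ n hn, small_case f' α' hsmall' γ n hn]
end

section
/- Let (L|K,v) be a valued field extension and x, x' ∈ L. If appr_v(x,K) = appr_v(x',K) then v(x−x') ≥ γ for all γ in supp appr_v(x,K). Conversely, if v(x−x') > γ for all γ in supp appr_v(x,K) ∪ supp appr_v(x',K), or if v(x−x') ∈ vK and v(x−x') > γ for all γ ∈ supp appr_v(x,K), then appr_v(x,K) = appr_v(x',K). -/
variable {L : Type*} [Field L] {Γ : Type*} [AddCommGroup Γ] [LinearOrder Γ] [IsOrderedAddMonoid Γ]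

def suppAppr (K : Subfield L) (v : AddValuation L (WithTop Γ)) (x : L) : Set (WithTop Γ) :=
  {γ | γ ∈ valSet K v ∧ ∃ c ∈ K, γ ≤ v (x - c)}

/-- Equality of the approximation types of `x` and `x'` over `K`: the closed and
open balls agree at every radius `γ ∈ vK∪{∞}`. -/
def apprEq (K : Subfield L) (v : AddValuation L (WithTop Γ)) (x x' : L) : Prop :=
  ∀ γ ∈ valSet K v,
    {c : L | c ∈ K ∧ γ ≤ v (x - c)} = {c : L | c ∈ K ∧ γ ≤ v (x' - c)} ∧
    {c : L | c ∈ K ∧ γ < v (x - c)} = {c : L | c ∈ K ∧ γ < v (x' - c)}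

section Helpers

variable {L : Type*} [Field L] {Γ : Type*} [AddCommGroup Γ] [LinearOrder Γ] [IsOrderedAddMonoid Γ]

lemma vswap (v : AddValuation L (WithTop Γ)) (a b : L) : v (a - b) = v (b - a) := by
  rw [← AddValuation.map_neg v, neg_sub]

lemma tri (v : AddValuation L (WithTop Γ)) (a b c : L) :
    min (v (a - b)) (v (b - c)) ≤ v (a - c) := by
  have := AddValuation.map_add v (a - b) (b - c)
  simpa using this

lemma step_le (v : AddValuation L (WithTop Γ)) {x x' c : L} {γ : WithTop Γ}
    (h1 : γ ≤ v (x - x')) (h2 : γ ≤ v (x - c)) : γ ≤ v (x' - c) := by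
  refine le_trans (le_min ?_ h2) (tri v x' x c)
  rw [vswap]; exact h1

lemma step_lt (v : AddValuation L (WithTop Γ)) {x x' c : L} {γ : WithTop Γ}
    (h1 : γ < v (x - x')) (h2 : γ < v (x - c)) : γ < v (x' - c) := by
  refine lt_of_lt_of_le (lt_min ?_ h2) (tri v x' x c)
  rw [vswap]; exact h1

end Helpers

/-- If `appr_v(x,K) = appr_v(x',K)` then `v(x−x') ≥ supp appr_v(x,K)`.
Conversely, if `v(x−x') > supp appr_v(x,K) ∪ supp appr_v(x',K)`, or if
`v(x−x') ∈ vK` and `v(x−x') > supp appr_v(x,K)`, then the approximation types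
are equal. -/
theorem apprEq_criteria (K : Subfield L) (v : AddValuation L (WithTop Γ)) (x x' : L) :
    (apprEq K v x x' → ∀ γ ∈ suppAppr K v x, γ ≤ v (x - x')) ∧
    ((∀ γ ∈ suppAppr K v x ∪ suppAppr K v x', γ < v (x - x')) → apprEq K v x x') ∧
    ((v (x - x') ∈ valSet K v ∧ ∀ γ ∈ suppAppr K v x, γ < v (x - x')) →
      apprEq K v x x') := by

  have vsym : v (x - x') = v (x' - x) := vswap v x x'
  refine ⟨?_, ?_, ?_⟩
  · rintro h γ ⟨hγ, c, hc, hxc⟩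
    obtain ⟨h1, -⟩ := h γ hγ
    have hx'c : γ ≤ v (x' - c) :=
      (show c ∈ {c : L | c ∈ K ∧ γ ≤ v (x' - c)} from h1 ▸ ⟨hc, hxc⟩).2
    refine le_trans (le_min hxc ?_) (tri v x c x')
    rw [vswap]; exact hx'c
  · intro h γ hγ
    constructor
    · ext c
      simp only [Set.mem_setOf_eq]
      constructor
      · rintro ⟨hc, hxc⟩
        have hγlt : γ < v (x - x') := h γ (Or.inl ⟨hγ, c, hc, hxc⟩)
        exact ⟨hc, step_le v hγlt.le hxc⟩
      · rintro ⟨hc, hxc⟩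
        have hγlt : γ < v (x - x') := h γ (Or.inr ⟨hγ, c, hc, hxc⟩)
        exact ⟨hc, step_le v (vsym ▸ hγlt.le) hxc⟩
    · ext c
      simp only [Set.mem_setOf_eq]
      constructor
      · rintro ⟨hc, hxc⟩
        have hγlt : γ < v (x - x') := h γ (Or.inl ⟨hγ, c, hc, hxc.le⟩)
        exact ⟨hc, step_lt v hγlt hxc⟩
      · rintro ⟨hc, hxc⟩
        have hγlt : γ < v (x - x') := h γ (Or.inr ⟨hγ, c, hc, hxc.le⟩)
        exact ⟨hc, step_lt v (vsym ▸ hγlt) hxc⟩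
  · rintro ⟨hδ, h⟩ γ hγ
    -- key: if some c ∈ K satisfies v(x-x') ≤ v(x-c), contradiction
    have key : ∀ c ∈ K, ¬ (v (x - x') ≤ v (x - c)) := by
      intro c hc hcon
      exact lt_irrefl _ (h (v (x - x')) ⟨hδ, c, hc, hcon⟩)
    constructor
    · ext c
      simp only [Set.mem_setOf_eq]
      constructor
      · rintro ⟨hc, hxc⟩
        have hγlt : γ < v (x - x') := h γ ⟨hγ, c, hc, hxc⟩
        exact ⟨hc, step_le v hγlt.le hxc⟩
      · rintro ⟨hc, hxc⟩
        have hγle : γ ≤ v (x - x') := by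
          by_contra hcon
          push_neg at hcon
          exact key c hc (step_le v (le_of_eq vsym) (hcon.le.trans hxc))
        exact ⟨hc, step_le v (vsym ▸ hγle) hxc⟩
    · ext c
      simp only [Set.mem_setOf_eq]
      constructor
      · rintro ⟨hc, hxc⟩
        have hγlt : γ < v (x - x') := h γ ⟨hγ, c, hc, hxc.le⟩
        exact ⟨hc, step_lt v hγlt hxc⟩
      · rintro ⟨hc, hxc⟩
        have hγlt : γ < v (x - x') := by
          by_contra hcon
          push_neg at hcon
          exact key c hc (step_le v (le_of_eq vsym) (hcon.trans hxc.le))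
        exact ⟨hc, step_lt v (vsym ▸ hγlt) hxc⟩
end

section
/- A valued field extension (L|K,v) is immediate if and only if for every x ∈ L \ K the approximation type appr_v(x,K) is immediate. -/
variable {L : Type*} [Field L] {Γ : Type*} [AddCommGroup Γ] [LinearOrder Γ] [IsOrderedAddMonoid Γ]

def IsImmediateExt (K : Subfield L) (v : AddValuation L (WithTop Γ)) : Prop :=
  (∀ y : L, y ≠ 0 → ∃ c ∈ K, v c = v y) ∧
  (∀ y : L, v y = 0 → ∃ c ∈ K, 0 < v (y - c))

def ImmediateAppr (K : Subfield L) (v : AddValuation L (WithTop Γ)) (x : L) : Prop :=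
  (suppAppr K v x).Nonempty ∧
    (⋂ γ ∈ suppAppr K v x, {c : L | c ∈ K ∧ γ ≤ v (x - c)}) = ∅

lemma v_ne_top {v : AddValuation L (WithTop Γ)} {x : L} (hx : x ≠ 0) : v x ≠ ⊤ := by
  intro h
  have h1 : v (x * x⁻¹) = v x + v x⁻¹ := v.map_mul _ _
  rw [mul_inv_cancel₀ hx, v.map_one, h, top_add] at h1
  exact (WithTop.zero_ne_top) h1

/-- `(L|K,v)` is immediate iff `appr_v(x,K)` is immediate for every
`x ∈ L \ K`. -/
theorem immediateExt_iff_immediateAppr (K : Subfield L)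
    (v : AddValuation L (WithTop Γ)) :
    IsImmediateExt K v ↔ ∀ x : L, x ∉ K → ImmediateAppr K v x := by
  constructor
  · rintro ⟨h1, h2⟩ x hx
    have hx0 : x ≠ 0 := fun h => hx (h ▸ K.zero_mem)
    obtain ⟨a, haK, hav⟩ := h1 x hx0
    have hsupp : (suppAppr K v x).Nonempty :=
      ⟨v x, ⟨⟨a, haK, hav⟩, 0, K.zero_mem, by rw [sub_zero]⟩⟩
    refine ⟨hsupp, ?_⟩
    rw [Set.eq_empty_iff_forall_notMem]
    intro c hc
    simp only [Set.mem_iInter, Set.mem_setOf_eq] at hc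
    obtain ⟨γ₀, hγ₀⟩ := hsupp
    have hcK : c ∈ K := (hc γ₀ hγ₀).1
    have hd0 : x - c ≠ 0 := sub_ne_zero.mpr (fun h => hx (h ▸ hcK))
    obtain ⟨a', ha'K, ha'v⟩ := h1 (x - c) hd0
    have ha'0 : a' ≠ 0 := by
      intro h
      exact v_ne_top hd0 (by rw [← ha'v, h, v.map_zero])
    have hy : v ((x - c) * a'⁻¹) = 0 := by
      rw [v.map_mul, ← ha'v, ← v.map_mul, mul_inv_cancel₀ ha'0, v.map_one]
    obtain ⟨b, hbK, hbv⟩ := h2 _ hy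
    set c' : L := c + a' * b with hc'
    have hc'K : c' ∈ K := K.add_mem hcK (K.mul_mem ha'K hbK)
    have hxc' : x - c' = a' * ((x - c) * a'⁻¹ - b) := by
      field_simp [hc']
      ring
    have hlt : v (x - c) < v (x - c') := by
      rw [hxc', v.map_mul, ← ha'v]
      calc v a' = v a' + 0 := (add_zero _).symm
        _ < v a' + v ((x - c) * a'⁻¹ - b) :=
          WithTop.add_lt_add_left (v_ne_top ha'0) hbv
    have hxc'0 : x - c' ≠ 0 := sub_ne_zero.mpr (fun h => hx (h ▸ hc'K))
    obtain ⟨e, heK, hev⟩ := h1 (x - c') hxc'0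
    have hγ : v (x - c') ∈ suppAppr K v x := ⟨⟨e, heK, hev⟩, c', hc'K, le_refl _⟩
    exact absurd ((hc _ hγ).2) (not_le_of_gt hlt)
  · intro h
    constructor
    · intro y hy0
      by_cases hyK : y ∈ K
      · exact ⟨y, hyK, rfl⟩
      · obtain ⟨hne, hempty⟩ := h y hyK
        have h0 : (0 : L) ∉ (⋂ γ ∈ suppAppr K v y, {c : L | c ∈ K ∧ γ ≤ v (y - c)}) := by
          rw [hempty]; exact Set.notMem_empty _
        simp only [Set.mem_iInter, Set.mem_setOf_eq, not_forall] at h0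
        obtain ⟨γ, hγ, hfail⟩ := h0
        have hvy : v y < γ := by
          by_contra hle
          push_neg at hle
          exact hfail ⟨K.zero_mem, by rwa [sub_zero]⟩
        obtain ⟨_, c, hcK, hγc⟩ := hγ
        have hylt : v y < v (y - c) := lt_of_lt_of_le hvy hγc
        refine ⟨c, hcK, le_antisymm ?_ ?_⟩
        · by_contra hlt
          push_neg at hlt
          have := v.map_add (y - c) c
          rw [sub_add_cancel] at this
          exact absurd this (not_le_of_gt (lt_min hylt hlt))
        · have := v.map_sub y (y - c)
          rw [sub_sub_cancel, min_eq_left (le_of_lt hylt)] at this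
          exact this
    · intro y hyv
      by_cases hyK : y ∈ K
      · refine ⟨y, hyK, ?_⟩
        rw [sub_self, v.map_zero]
        exact Ne.lt_top' (Ne.symm WithTop.zero_ne_top) |>.trans_le le_rfl
      · obtain ⟨hne, hempty⟩ := h y hyK
        have h0 : (0 : L) ∉ (⋂ γ ∈ suppAppr K v y, {c : L | c ∈ K ∧ γ ≤ v (y - c)}) := by
          rw [hempty]; exact Set.notMem_empty _
        simp only [Set.mem_iInter, Set.mem_setOf_eq, not_forall] at h0
        obtain ⟨γ, hγ, hfail⟩ := h0
        have hvy : v y < γ := by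
          by_contra hle
          push_neg at hle
          exact hfail ⟨K.zero_mem, by rwa [sub_zero]⟩
        obtain ⟨_, c, hcK, hγc⟩ := hγ
        exact ⟨c, hcK, lt_of_lt_of_le (hyv ▸ hvy) hγc⟩
end

section
/- Let A be an immediate approximation type over (K,v), let (L|K,v) be an extension, and let x ∈ L. Then the following are equivalent: (a) appr_v(x,K) = A; (b) there is a cofinal subset S of supp A such that for every γ ∈ S there exists c ∈ A_γ with v(x−c) ≥ γ; (c) for every γ ∈ supp A there exists c ∈ A_γ with v(x−c) ≥ γ. -/
variable {L : Type*} [Field L] {Γ : Type*} [AddCommGroup Γ] [LinearOrder Γ]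
  [IsOrderedAddMonoid Γ]

/-- An (abstract) approximation type over `(K,v)`: a full nest of closed and open
ultrametric balls of `K`, encoded by the (possibly empty) closed ball `closedB γ`
and open ball `openB γ` of each radius `γ ∈ vK ∪ {∞}`. -/
structure ApproxType (K : Subfield L) (v : AddValuation L (WithTop Γ)) where
  closedB : WithTop Γ → Set L
  openB : WithTop Γ → Set L
  closed_ball : ∀ γ, (closedB γ).Nonempty →
    (∃ c ∈ K, v c = γ) ∧ ∀ b ∈ closedB γ, closedB γ = {a : L | a ∈ K ∧ γ ≤ v (a - b)}
  open_ball : ∀ γ, (openB γ).Nonempty →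
    (∃ c ∈ K, v c = γ) ∧ γ ≠ ⊤ ∧
      ∀ b ∈ openB γ, openB γ = {a : L | a ∈ K ∧ γ < v (a - b)}
  open_subset_closed : ∀ γ, openB γ ⊆ closedB γ
  full_closed : ∀ γ δ, γ ≤ δ → (∃ c ∈ K, v c = γ) → (closedB δ).Nonempty →
    closedB δ ⊆ closedB γ
  full_open : ∀ γ δ, γ < δ → γ ≠ ⊤ → (∃ c ∈ K, v c = γ) → (closedB δ).Nonempty →
    closedB δ ⊆ openB γ

namespace ApproxType

variable {K : Subfield L} {v : AddValuation L (WithTop Γ)}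

/-- The support: the set of radii of the nonempty closed balls of `A`. -/
def supp (A : ApproxType K v) : Set (WithTop Γ) := {γ | (A.closedB γ).Nonempty}

/-- The intersection of all balls of `A`. -/
def inter (A : ApproxType K v) : Set L :=
  (⋂ γ ∈ A.supp, A.closedB γ) ∩ (⋂ γ ∈ {γ | (A.openB γ).Nonempty}, A.openB γ)

/-- `A` is immediate: nonempty with empty total intersection. -/
def Immediate (A : ApproxType K v) : Prop := A.supp.Nonempty ∧ A.inter = ∅

/-- `appr_v(x,K) = A`: the supports coincide and the closed and open balls of `A`
are exactly those of the approximation type of `x` over `K`. -/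
def Realizes (x : L) (A : ApproxType K v) : Prop :=
  (∀ γ : WithTop Γ, ((∃ c ∈ K, v c = γ) ∧ ∃ c ∈ K, γ ≤ v (x - c)) ↔ γ ∈ A.supp) ∧
  ∀ γ ∈ A.supp, A.closedB γ = {c : L | c ∈ K ∧ γ ≤ v (x - c)} ∧
    A.openB γ = {c : L | c ∈ K ∧ γ < v (x - c)}

end ApproxType

section Aux

variable {K : Subfield L} {v : AddValuation L (WithTop Γ)}

private lemma ultra_le {γ : WithTop Γ} {a b c : L}
    (h1 : γ ≤ v (a - c)) (h2 : γ ≤ v (b - c)) : γ ≤ v (a - b) := by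
  have he : a - b = (a - c) - (b - c) := by ring
  rw [he]
  exact le_trans (le_min h1 h2) (v.map_sub _ _)

private lemma ultra_lt {γ : WithTop Γ} {a b c : L}
    (h1 : γ < v (a - c)) (h2 : γ < v (b - c)) : γ < v (a - b) := by
  have he : a - b = (a - c) - (b - c) := by ring
  rw [he]
  exact lt_of_lt_of_le (lt_min h1 h2) (v.map_sub _ _)

private lemma mem_subfield (A : ApproxType K v) {γ : WithTop Γ} {c : L}
    (hc : c ∈ A.closedB γ) : c ∈ K := by
  have h := (A.closed_ball γ ⟨c, hc⟩).2 c hc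
  rw [h] at hc
  exact hc.1

private lemma supp_no_max (A : ApproxType K v) (hA : A.Immediate) {γ : WithTop Γ}
    (hγ : γ ∈ A.supp) : ∃ δ ∈ A.supp, γ < δ := by
  by_contra hmax
  push_neg at hmax
  have hmem : ∃ b, b ∈ A.closedB γ ∧ ((A.openB γ).Nonempty → b ∈ A.openB γ) := by
    by_cases ho : (A.openB γ).Nonempty
    · obtain ⟨b, hb⟩ := ho
      exact ⟨b, A.open_subset_closed γ hb, fun _ => hb⟩
    · obtain ⟨b, hb⟩ := hγ
      exact ⟨b, hb, fun h' => absurd h' ho⟩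
  obtain ⟨b, hbc, hbo⟩ := hmem
  have hbin : b ∈ A.inter := by
    constructor
    · refine Set.mem_iInter₂.mpr fun δ hδ => ?_
      exact A.full_closed δ γ (hmax δ hδ) (A.closed_ball δ hδ).1 hγ hbc
    · refine Set.mem_iInter₂.mpr fun δ hδ => ?_
      have hδo : (A.openB δ).Nonempty := hδ
      have hδs : δ ∈ A.supp := hδo.mono (A.open_subset_closed δ)
      rcases lt_or_eq_of_le (hmax δ hδs) with hlt | heq
      · exact A.full_open δ γ hlt (A.open_ball δ hδo).2.1 (A.open_ball δ hδo).1 hγ hbc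
      · rw [heq]
        exact hbo (heq ▸ hδo)
  rw [hA.2] at hbin
  exact hbin

private lemma exists_open (A : ApproxType K v) (hA : A.Immediate) {x : L}
    (hyp : ∀ γ ∈ A.supp, ∃ c ∈ A.closedB γ, γ ≤ v (x - c)) {γ : WithTop Γ}
    (hγ : γ ∈ A.supp) : ∃ c ∈ A.openB γ, γ < v (x - c) := by
  obtain ⟨δ, hδ, hlt⟩ := supp_no_max A hA hγ
  obtain ⟨c, hc, hcv⟩ := hyp δ hδ
  refine ⟨c, A.full_open γ δ hlt (ne_top_of_lt hlt) (A.closed_ball γ hγ).1 hδ hc,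
    lt_of_lt_of_le hlt hcv⟩

end Aux

/-- For an immediate approximation type `A` and an element `x` of an extension,
TFAE: (a) `appr_v(x,K) = A`; (b) there is a cofinal subset `S` of `supp A` such
that for every `γ ∈ S` some `c ∈ A_γ` satisfies `v(x−c) ≥ γ`; (c) for every
`γ ∈ supp A` some `c ∈ A_γ` satisfies `v(x−c) ≥ γ`. -/
theorem realizes_immediate_tfae (K : Subfield L) (v : AddValuation L (WithTop Γ))
    (A : ApproxType K v) (hA : A.Immediate) (x : L) :
    (ApproxType.Realizes x A ↔ ∀ γ ∈ A.supp, ∃ c ∈ A.closedB γ, γ ≤ v (x - c)) ∧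
    ((∃ S ⊆ A.supp, (∀ γ ∈ A.supp, ∃ δ ∈ S, γ ≤ δ) ∧
        ∀ γ ∈ S, ∃ c ∈ A.closedB γ, γ ≤ v (x - c)) ↔
      ∀ γ ∈ A.supp, ∃ c ∈ A.closedB γ, γ ≤ v (x - c)) := by
  constructor
  · constructor
    · -- (a) → (c)
      intro hr γ hγ
      have hd := (hr.2 γ hγ).1
      obtain ⟨c, hc⟩ := hγ
      refine ⟨c, hc, ?_⟩
      rw [hd] at hc
      exact hc.2
    · -- (c) → (a)
      intro hyp
      constructor
      · intro γ
        constructor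
        · rintro ⟨⟨c, hcK, hcv⟩, ⟨d, hdK, hdv⟩⟩
          by_contra hns
          -- all δ ∈ supp are < γ
          have hlt : ∀ δ ∈ A.supp, δ < γ := by
            intro δ hδ
            rcases lt_or_ge δ γ with h | h
            · exact h
            · exact absurd (hδ.mono (A.full_closed γ δ h ⟨c, hcK, hcv⟩ hδ)) hns
          have hdin : d ∈ A.inter := by
            constructor
            · refine Set.mem_iInter₂.mpr fun δ hδ => ?_
              obtain ⟨b, hb, hbv⟩ := hyp δ hδ
              rw [(A.closed_ball δ hδ).2 b hb]
              refine ⟨hdK, ?_⟩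
              have h1 : δ ≤ v (d - x) := by
                rw [v.map_sub_swap]
                exact le_trans (hlt δ hδ).le hdv
              have h2 : δ ≤ v (b - x) := by
                rw [v.map_sub_swap]
                exact hbv
              exact ultra_le h1 h2
            · refine Set.mem_iInter₂.mpr fun δ hδ => ?_
              have hδo : (A.openB δ).Nonempty := hδ
              have hδs : δ ∈ A.supp := hδo.mono (A.open_subset_closed δ)
              obtain ⟨b, hb, hbv⟩ := exists_open A hA hyp hδs
              rw [(A.open_ball δ hδo).2.2 b hb]
              refine ⟨hdK, ?_⟩
              have h1 : δ < v (d - x) := by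
                rw [v.map_sub_swap]
                exact lt_of_lt_of_le (hlt δ hδs) hdv
              have h2 : δ < v (b - x) := by
                rw [v.map_sub_swap]
                exact hbv
              exact ultra_lt h1 h2
          rw [hA.2] at hdin
          exact hdin
        · intro hγ
          obtain ⟨c, hc, hcv⟩ := hyp γ hγ
          exact ⟨(A.closed_ball γ hγ).1, c, mem_subfield A hc, hcv⟩
      · intro γ hγ
        obtain ⟨b, hb, hbv⟩ := hyp γ hγ
        obtain ⟨b', hb', hbv'⟩ := exists_open A hA hyp hγ
        constructor
        · rw [(A.closed_ball γ hγ).2 b hb]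
          ext a
          constructor
          · rintro ⟨haK, hav⟩
            exact ⟨haK, ultra_le hbv hav⟩
          · rintro ⟨haK, hav⟩
            refine ⟨haK, ?_⟩
            have h1 : γ ≤ v (a - x) := by rw [v.map_sub_swap]; exact hav
            have h2 : γ ≤ v (b - x) := by rw [v.map_sub_swap]; exact hbv
            exact ultra_le h1 h2
        · rw [(A.open_ball γ ⟨b', hb'⟩).2.2 b' hb']
          ext a
          constructor
          · rintro ⟨haK, hav⟩
            exact ⟨haK, ultra_lt hbv' hav⟩
          · rintro ⟨haK, hav⟩
            refine ⟨haK, ?_⟩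
            have h1 : γ < v (a - x) := by rw [v.map_sub_swap]; exact hav
            have h2 : γ < v (b' - x) := by rw [v.map_sub_swap]; exact hbv'
            exact ultra_lt h1 h2
  · constructor
    · -- (b) → (c)
      rintro ⟨S, hS, hcof, hval⟩ γ hγ
      obtain ⟨δ, hδS, hle⟩ := hcof γ hγ
      obtain ⟨c, hc, hcv⟩ := hval δ hδS
      exact ⟨c, A.full_closed γ δ hle (A.closed_ball γ hγ).1 (hS hδS) hc,
        le_trans hle hcv⟩
    · -- (c) → (b)
      intro h
      exact ⟨A.supp, subset_rfl, fun γ hγ => ⟨γ, hγ, le_rfl⟩, fun γ hγ => h γ hγ⟩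
end

section
/- Let α_1, …, α_m be elements of an ordered abelian group Γ, let Υ ⊂ Γ be a subset without a maximal element, and let t_1, …, t_m be distinct integers. Then there exist β ∈ Υ and a permutation σ of {1,…,m} such that for all γ ∈ Υ with γ ≥ β: α_{σ(1)} + t_{σ(1)}γ > α_{σ(2)} + t_{σ(2)}γ > ⋯ > α_{σ(m)} + t_{σ(m)}γ. -/
/-- Sign stability: for `0 < n`, eventually on `Υ` either `c < n • γ` or always `n • γ < c`. -/
lemma ostrowski_key {Γ : Type*} [AddCommGroup Γ] [LinearOrder Γ] [IsOrderedAddMonoid Γ]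
    (Υ : Set Γ) (hne : Υ.Nonempty) (hnomax : ∀ γ ∈ Υ, ∃ δ ∈ Υ, γ < δ)
    (c : Γ) (n : ℤ) (hn : 0 < n) :
    (∃ β ∈ Υ, ∀ γ ∈ Υ, β ≤ γ → c < n • γ) ∨ (∀ γ ∈ Υ, n • γ < c) := by
  by_cases h : ∃ γ₀ ∈ Υ, c ≤ n • γ₀
  · obtain ⟨γ₀, hγ₀, hc⟩ := h
    obtain ⟨δ, hδ, hlt⟩ := hnomax γ₀ hγ₀
    refine Or.inl ⟨δ, hδ, fun γ hγ hle => ?_⟩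
    calc c ≤ n • γ₀ := hc
      _ < n • δ := zsmul_lt_zsmul_right hn hlt
      _ ≤ n • γ := zsmul_le_zsmul_right hn.le hle
  · push_neg at h
    exact Or.inr h

/-- (Ostrowski/Kaplansky) Given `α₁,…,α_m` in an ordered abelian group `Γ`,
a subset `Υ ⊆ Γ` without maximal element, and distinct integers `t₁,…,t_m`,
there are `β ∈ Υ` and a permutation `σ` of the indices such that for all
`γ ∈ Υ` with `γ ≥ β` the values `α_{σ(i)} + t_{σ(i)}γ` are strictly decreasing
in `i`. -/
theorem ostrowski_lemma {Γ : Type*} [AddCommGroup Γ] [LinearOrder Γ] [IsOrderedAddMonoid Γ] (m : ℕ)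
    (α : Fin m → Γ) (t : Fin m → ℤ) (ht : Function.Injective t)
    (Υ : Set Γ) (hne : Υ.Nonempty) (hnomax : ∀ γ ∈ Υ, ∃ δ ∈ Υ, γ < δ) :
    ∃ β ∈ Υ, ∃ σ : Equiv.Perm (Fin m), ∀ γ ∈ Υ, β ≤ γ →
      ∀ i j : Fin m, i < j →
        α (σ j) + t (σ j) • γ < α (σ i) + t (σ i) • γ := by
  -- Q i j γ : value at i is bigger than value at j
  set Q : Fin m → Fin m → Γ → Prop := fun i j γ => α j + t j • γ < α i + t i • γ with hQ
  have hQ_iff : ∀ (i j : Fin m) (γ : Γ), Q i j γ ↔ α j - α i < (t i - t j) • γ := by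
    intro i j γ
    rw [hQ, sub_smul]
    constructor
    · intro h
      rw [sub_lt_sub_iff]
      calc α j + t j • γ < α i + t i • γ := h
        _ = t i • γ + α i := add_comm _ _
    · intro h
      rw [sub_lt_sub_iff] at h
      calc α j + t j • γ < t i • γ + α i := h
        _ = α i + t i • γ := add_comm _ _
  -- pairwise eventual stability
  have pairwise : ∀ i j : Fin m, i ≠ j →
      ∃ β ∈ Υ, (∀ γ ∈ Υ, β ≤ γ → Q i j γ) ∨ (∀ γ ∈ Υ, β ≤ γ → Q j i γ) := by
    have main : ∀ i j : Fin m, t j < t i →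
        ∃ β ∈ Υ, (∀ γ ∈ Υ, β ≤ γ → Q i j γ) ∨ (∀ γ ∈ Υ, β ≤ γ → Q j i γ) := by
      intro i j hij
      rcases ostrowski_key Υ hne hnomax (α j - α i) (t i - t j) (sub_pos.mpr hij) with
        ⟨β, hβ, hall⟩ | hall
      · exact ⟨β, hβ, Or.inl fun γ hγ hle => (hQ_iff i j γ).mpr (hall γ hγ hle)⟩
      · obtain ⟨β, hβ⟩ := hne
        refine ⟨β, hβ, Or.inr fun γ hγ _ => ?_⟩
        rw [hQ_iff j i γ]
        have := hall γ hγ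
        have h2 : (t j - t i) • γ = -((t i - t j) • γ) := by rw [← neg_smul, neg_sub]
        rw [h2]
        have : -(α j - α i) < -((t i - t j) • γ) := neg_lt_neg this
        rw [neg_sub] at this
        exact this
    intro i j hij
    rcases lt_or_gt_of_ne (fun h => hij (ht h)) with h | h
    · obtain ⟨β, hβ, hd⟩ := main j i h
      exact ⟨β, hβ, hd.symm⟩
    · exact main i j h
  choose B hBmem hBprop using pairwise
  -- combine the finitely many thresholds
  obtain ⟨β₀, hβ₀⟩ := hne
  set S : Finset Γ :=
    insert β₀ (Finset.image (fun p : {p : Fin m × Fin m // p.1 ≠ p.2} => B p.1.1 p.1.2 p.2)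
      Finset.univ) with hS
  have hSne : S.Nonempty := ⟨β₀, Finset.mem_insert_self _ _⟩
  set β := S.max' hSne with hβdef
  have hβS : β ∈ S := S.max'_mem hSne
  have hSsub : ∀ x ∈ S, x ∈ Υ := by
    intro x hx
    rw [hS] at hx
    rcases Finset.mem_insert.mp hx with h | h
    · exact h ▸ hβ₀
    · obtain ⟨p, _, hp⟩ := Finset.mem_image.mp h
      exact hp ▸ hBmem p.1.1 p.1.2 p.2
  have hβΥ : β ∈ Υ := hSsub β hβS
  have hBle : ∀ (i j : Fin m) (h : i ≠ j), B i j h ≤ β := by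
    intro i j h
    apply S.le_max'
    rw [hS]
    exact Finset.mem_insert_of_mem (Finset.mem_image.mpr ⟨⟨(i, j), h⟩, Finset.mem_univ _, rfl⟩)
  -- stability: Q at β implies Q at all γ ≥ β
  have hstab : ∀ (i j : Fin m), i ≠ j → Q i j β → ∀ γ ∈ Υ, β ≤ γ → Q i j γ := by
    intro i j hij hQβ γ hγ hle
    rcases hBprop i j hij with h | h
    · exact h γ hγ (le_trans (hBle i j hij) hle)
    · exact absurd (h β hβΥ (hBle i j hij)) (fun h' => absurd (lt_trans hQβ h') (lt_irrefl _))
  -- sort by the value at β, descending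
  set g : Fin m → Γ := fun i => -(α i + t i • β) with hg
  refine ⟨β, hβΥ, Tuple.sort g, fun γ hγ hle i j hij => ?_⟩
  set σ := Tuple.sort g with hσ
  have hσne : σ i ≠ σ j := fun h => (ne_of_lt hij) (σ.injective h)
  have hmono : g (σ i) ≤ g (σ j) := Tuple.monotone_sort g hij.le
  have hle' : α (σ j) + t (σ j) • β ≤ α (σ i) + t (σ i) • β := by
    have := neg_le_neg hmono
    simpa [hg] using this
  have hQβ : Q (σ i) (σ j) β := by
    rcases lt_or_eq_of_le hle' with h | h
    · exact h
    · exfalso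
      rcases hBprop (σ i) (σ j) hσne with hd | hd
      · exact absurd (hd β hβΥ (hBle _ _ hσne)) (by rw [hQ]; simp [h])
      · exact absurd (hd β hβΥ (hBle _ _ hσne)) (by rw [hQ]; simp [h])
  exact hstab (σ i) (σ j) hσne hQβ γ hγ hle
end

section
/- Let A be a nonempty non-trivial approximation type over (K,v). Then A is residue-extending if and only if there exists δ ∈ supp A such that ⋂A = A_δ and A°_δ = ∅; in that case δ is the maximal element of supp A. Moreover, every non-trivial approximation type is exactly one of: immediate, value-extending, or residue-extending. -/
variable {L : Type*} [Field L] {Γ : Type*} [AddCommGroup Γ] [LinearOrder Γ] [IsOrderedAddMonoid Γ]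

namespace ApproxType

variable {K : Subfield L} {v : AddValuation L (WithTop Γ)}

/-- `A` is trivial: `∞ ∈ supp A`. -/
def IsTrivial (A : ApproxType K v) : Prop := (⊤ : WithTop Γ) ∈ A.supp

/-- `A` is value-extending: `⋂A ≠ ∅` and `A°_γ ≠ ∅` for every `γ ∈ supp A`. -/
def ValueExt (A : ApproxType K v) : Prop :=
  A.inter.Nonempty ∧ ∀ γ ∈ A.supp, (A.openB γ).Nonempty

/-- `A` is residue-extending: `⋂A ≠ ∅` and every `c ∈ K` lies in some
`A_γ \ A°_γ` with `γ ∈ supp A`. -/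
def ResidueExt (A : ApproxType K v) : Prop :=
  A.inter.Nonempty ∧ ∀ c ∈ K, ∃ γ ∈ A.supp, c ∈ A.closedB γ ∧ c ∉ A.openB γ

end ApproxType

section Aux

variable {K : Subfield L} {v : AddValuation L (WithTop Γ)}

lemma aux_mem_K {A : ApproxType K v} {γ : WithTop Γ} {b : L}
    (hb : b ∈ A.closedB γ) : b ∈ K := by
  have h2 := (A.closed_ball γ ⟨b, hb⟩).2 b hb
  have hb' : b ∈ A.closedB γ := hb
  rw [h2] at hb'
  exact hb'.1

lemma aux_max {A : ApproxType K v} (hnt : ¬ A.IsTrivial) {δ : WithTop Γ}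
    (hδ : δ ∈ A.supp) (hopen : A.openB δ = ∅) : ∀ γ ∈ A.supp, γ ≤ δ := by
  intro γ hγ
  by_contra h
  push_neg at h
  have hδtop : δ ≠ ⊤ := by intro he; subst he; exact hnt hδ
  have hK : ∃ c ∈ K, v c = δ := (A.closed_ball δ hδ).1
  have hsub := A.full_open δ γ h hδtop hK hγ
  have hne : (A.openB δ).Nonempty := hγ.mono hsub
  rw [hopen] at hne
  exact Set.not_nonempty_empty hne

lemma aux_inter_eq {A : ApproxType K v} (hnt : ¬ A.IsTrivial) {δ : WithTop Γ}
    (hδ : δ ∈ A.supp) (hopen : A.openB δ = ∅) : A.inter = A.closedB δ := by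
  apply Set.Subset.antisymm
  · intro x hx
    exact Set.mem_iInter₂.1 hx.1 δ hδ
  · intro x hx
    constructor
    · refine Set.mem_iInter₂.2 fun γ hγ => ?_
      exact A.full_closed γ δ (aux_max hnt hδ hopen γ hγ) (A.closed_ball γ hγ).1 hδ hx
    · refine Set.mem_iInter₂.2 fun γ hγ => ?_
      have hγsupp : γ ∈ A.supp := hγ.mono (A.open_subset_closed γ)
      have hle : γ ≤ δ := aux_max hnt hδ hopen γ hγsupp
      have hγ' : (A.openB γ).Nonempty := hγ
      have hneq : γ ≠ δ := by
        intro he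
        rw [he, hopen] at hγ'
        exact Set.not_nonempty_empty hγ'
      obtain ⟨hK, htop, _⟩ := A.open_ball γ hγ'
      exact A.full_open γ δ (lt_of_le_of_ne hle hneq) htop hK hδ hx

lemma aux_residueExt {A : ApproxType K v} (hnt : ¬ A.IsTrivial) {δ : WithTop Γ}
    (hδ : δ ∈ A.supp) (hopen : A.openB δ = ∅) : A.ResidueExt := by
  have hie := aux_inter_eq hnt hδ hopen
  refine ⟨hie ▸ hδ, fun c hc => ?_⟩
  obtain ⟨b, hb⟩ := hδ
  have hδsupp : δ ∈ A.supp := ⟨b, hb⟩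
  by_cases hcδ : c ∈ A.closedB δ
  · exact ⟨δ, hδsupp, hcδ, by rw [hopen]; exact Set.notMem_empty c⟩
  · have hbK : b ∈ K := aux_mem_K hb
    set γ := v (c - b) with hγdef
    have hball := (A.closed_ball δ hδsupp).2 b hb
    have hγδ : γ < δ := by
      by_contra h
      push_neg at h
      exact hcδ (by rw [hball]; exact ⟨hc, h⟩)
    have hγK : ∃ x ∈ K, v x = γ := ⟨c - b, K.sub_mem hc hbK, rfl⟩
    have hγsupp : γ ∈ A.supp :=
      hδsupp.mono (A.full_closed γ δ hγδ.le hγK hδsupp)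
    have hbγ : b ∈ A.closedB γ := A.full_closed γ δ hγδ.le hγK hδsupp hb
    have hcmem : c ∈ A.closedB γ := by
      rw [(A.closed_ball γ hγsupp).2 b hbγ]
      exact ⟨hc, le_refl γ⟩
    refine ⟨γ, hγsupp, hcmem, fun hco => ?_⟩
    have hγtop : γ ≠ ⊤ := (lt_of_lt_of_le hγδ le_top).ne
    have hbo : b ∈ A.openB γ := A.full_open γ δ hγδ hγtop hγK hδsupp hb
    have hdesc := (A.open_ball γ ⟨b, hbo⟩).2.2 b hbo
    rw [hdesc] at hco
    exact lt_irrefl γ hco.2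

lemma aux_of_residueExt {A : ApproxType K v} (h : A.ResidueExt) :
    ∃ δ ∈ A.supp, A.openB δ = ∅ := by
  obtain ⟨⟨b, hb⟩, h2⟩ := h
  obtain ⟨γ₀, hγ₀, _, _⟩ := h2 0 K.zero_mem
  have hbK : b ∈ K := aux_mem_K (Set.mem_iInter₂.1 hb.1 γ₀ hγ₀)
  obtain ⟨δ, hδ, _, hbno⟩ := h2 b hbK
  refine ⟨δ, hδ, Set.not_nonempty_iff_eq_empty.1 fun hno => ?_⟩
  exact hbno (Set.mem_iInter₂.1 hb.2 δ hno)

end Aux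

/-- For a nonempty non-trivial approximation type `A`: `A` is residue-extending
iff there is `δ ∈ supp A` with `⋂A = A_δ` and `A°_δ = ∅`, in which case `δ` is
the maximal element of `supp A`. Moreover, `A` is exactly one of: immediate,
value-extending, residue-extending. -/
theorem residueExt_iff_and_trichotomy (K : Subfield L)
    (v : AddValuation L (WithTop Γ)) (A : ApproxType K v)
    (hne : A.supp.Nonempty) (hnt : ¬ A.IsTrivial) :
    (A.ResidueExt ↔
      ∃ δ ∈ A.supp, A.inter = A.closedB δ ∧ A.openB δ = ∅ ∧ ∀ γ ∈ A.supp, γ ≤ δ) ∧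
    (A.Immediate ∨ A.ValueExt ∨ A.ResidueExt) ∧
    ¬(A.Immediate ∧ A.ValueExt) ∧ ¬(A.Immediate ∧ A.ResidueExt) ∧
    ¬(A.ValueExt ∧ A.ResidueExt) := by
  refine ⟨⟨fun h => ?_, fun ⟨δ, hδ, _, hopen, _⟩ => aux_residueExt hnt hδ hopen⟩,
    ?_, ?_, ?_, ?_⟩
  · obtain ⟨δ, hδ, hopen⟩ := aux_of_residueExt h
    exact ⟨δ, hδ, aux_inter_eq hnt hδ hopen, hopen, aux_max hnt hδ hopen⟩
  · by_cases hi : A.inter = ∅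
    · exact Or.inl ⟨hne, hi⟩
    · have hni : A.inter.Nonempty := Set.nonempty_iff_ne_empty.2 hi
      by_cases hv : ∀ γ ∈ A.supp, (A.openB γ).Nonempty
      · exact Or.inr (Or.inl ⟨hni, hv⟩)
      · push_neg at hv
        obtain ⟨δ, hδ, hopen⟩ := hv
        exact Or.inr (Or.inr
          (aux_residueExt hnt hδ hopen))
  · rintro ⟨⟨_, hi⟩, ⟨hni, _⟩⟩
    rw [hi] at hni
    exact Set.not_nonempty_empty hni
  · rintro ⟨⟨_, hi⟩, ⟨hni, _⟩⟩
    rw [hi] at hni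
    exact Set.not_nonempty_empty hni
  · rintro ⟨⟨_, hv⟩, hr⟩
    obtain ⟨δ, hδ, hopen⟩ := aux_of_residueExt hr
    exact Set.not_nonempty_empty (hopen ▸ hv δ hδ)
end

section
/- Let (K(x)|K,v) be a valued field extension and A := appr_v(x,K). Then A is value-extending if and only if there exists b ∈ K with v(x−b) ∉ vK. In this case supp A = v(x−K) ∩ vK = {γ ∈ vK : γ < v(x−b)}, and ⋂A is exactly the set of b ∈ K with v(x−b) ∉ vK. -/
variable {L : Type*} [Field L] {Γ : Type*} [AddCommGroup Γ] [LinearOrder Γ] [IsOrderedAddMonoid Γ]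

/-- `⋂A` for `A = appr_v(x,K)`: the elements of `K` lying in every nonempty
closed and open ball of the approximation type of `x`. -/
def interAppr (K : Subfield L) (v : AddValuation L (WithTop Γ)) (x : L) : Set L :=
  {b | b ∈ K ∧ (∀ γ ∈ valSet K v, (∃ c ∈ K, γ ≤ v (x - c)) → γ ≤ v (x - b)) ∧
    (∀ γ ∈ valSet K v, (∃ c ∈ K, γ < v (x - c)) → γ < v (x - b))}

/-- `A = appr_v(x,K)` is value-extending: `⋂A ≠ ∅` and each open ball at a
radius of the support is nonempty. -/
def ValueExtAppr (K : Subfield L) (v : AddValuation L (WithTop Γ)) (x : L) : Prop :=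
  (interAppr K v x).Nonempty ∧
  ∀ γ ∈ valSet K v, (∃ c ∈ K, γ ≤ v (x - c)) → ∃ c ∈ K, γ < v (x - c)

/-- Key: if `v(x-b) ∉ vK` then `v(x-b)` is maximal among `v(x-c)`. -/
lemma key_le {K : Subfield L} {v : AddValuation L (WithTop Γ)} {x b : L}
    (hbK : b ∈ K) (hb : v (x - b) ∉ valSet K v) {c : L} (hc : c ∈ K) :
    v (x - c) ≤ v (x - b) := by
  by_contra h
  push_neg at h
  have : v (b - c) = v (x - b) := by
    have : (x - c) - (x - b) = b - c := by ring
    rw [← this, AddValuation.map_sub_eq_of_lt_right _ h]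
  exact hb ⟨b - c, sub_mem hbK hc, this⟩

lemma key_mem {K : Subfield L} {v : AddValuation L (WithTop Γ)} {x b : L}
    (hbK : b ∈ K) {γ : WithTop Γ} (hγ : γ ∈ valSet K v) (hlt : γ < v (x - b)) :
    ∃ c ∈ K, v (x - c) = γ := by
  obtain ⟨d, hdK, hd⟩ := hγ
  refine ⟨b + d, add_mem hbK hdK, ?_⟩
  have : x - (b + d) = (x - b) - d := by ring
  rw [this, AddValuation.map_sub_eq_of_lt_right _ (hd ▸ hlt), hd]

/-- If `v(x-b) ∉ vK` then `b ∈ ⋂A`. -/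
lemma mem_interAppr {K : Subfield L} {v : AddValuation L (WithTop Γ)} {x b : L}
    (hbK : b ∈ K) (hb : v (x - b) ∉ valSet K v) : b ∈ interAppr K v x := by
  refine ⟨hbK, fun γ hγ ⟨c, hc, hle⟩ => le_trans hle (key_le hbK hb hc),
    fun γ hγ ⟨c, hc, hlt⟩ => lt_of_lt_of_le hlt (key_le hbK hb hc)⟩

/-- `A := appr_v(x,K)` is value-extending iff there is `b ∈ K` with
`v(x−b) ∉ vK`; in that case `supp A = v(x−K) ∩ vK = {γ ∈ vK : γ < v(x−b)}` and
`⋂A = {b ∈ K : v(x−b) ∉ vK}`. -/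
theorem valueExtAppr_iff (K : Subfield L) (v : AddValuation L (WithTop Γ))
    (x : L) (hx : x ∉ K) :
    (ValueExtAppr K v x ↔ ∃ b ∈ K, v (x - b) ∉ valSet K v) ∧
    (∀ b ∈ K, v (x - b) ∉ valSet K v →
      suppAppr K v x = vxK K v x ∩ valSet K v ∧
      suppAppr K v x = {γ | γ ∈ valSet K v ∧ γ < v (x - b)} ∧
      interAppr K v x = {b' : L | b' ∈ K ∧ v (x - b') ∉ valSet K v}) := by
  constructor
  · constructor
    · rintro ⟨⟨b, hbK, hcl, hop⟩, hsec⟩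
      refine ⟨b, hbK, fun hmem => ?_⟩
      obtain ⟨c, hcK, hlt⟩ := hsec (v (x - b)) hmem ⟨b, hbK, le_refl _⟩
      exact absurd (hop (v (x - b)) hmem ⟨c, hcK, hlt⟩) (lt_irrefl _)
    · rintro ⟨b, hbK, hb⟩
      refine ⟨⟨b, mem_interAppr hbK hb⟩, fun γ hγ ⟨c, hcK, hle⟩ => ?_⟩
      have h1 : γ ≤ v (x - b) := le_trans hle (key_le hbK hb hcK)
      exact ⟨b, hbK, lt_of_le_of_ne h1 (fun h => hb (h ▸ hγ))⟩
  · intro b hbK hb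
    have hsupp : suppAppr K v x = {γ | γ ∈ valSet K v ∧ γ < v (x - b)} := by
      ext γ
      constructor
      · rintro ⟨hγ, c, hcK, hle⟩
        exact ⟨hγ, lt_of_le_of_ne (le_trans hle (key_le hbK hb hcK))
          (fun h => hb (h ▸ hγ))⟩
      · rintro ⟨hγ, hlt⟩
        exact ⟨hγ, b, hbK, le_of_lt hlt⟩
    refine ⟨?_, hsupp, ?_⟩
    · ext γ
      constructor
      · intro hγ
        have hγ' := hsupp ▸ hγ
        obtain ⟨h1, h2⟩ := hγ'
        obtain ⟨c, hcK, hc⟩ := key_mem hbK h1 h2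
        exact ⟨⟨c, hcK, hc⟩, h1⟩
      · rintro ⟨⟨c, hcK, hc⟩, hγ⟩
        exact ⟨hγ, c, hcK, le_of_eq hc.symm⟩
    · ext b'
      constructor
      · rintro ⟨hb'K, hcl, hop⟩
        refine ⟨hb'K, fun hmem => ?_⟩
        have h1 : v (x - b') < v (x - b) :=
          lt_of_le_of_ne (key_le hbK hb hb'K) (fun h => hb (h ▸ hmem))
        exact absurd (hop (v (x - b')) hmem ⟨b, hbK, h1⟩) (lt_irrefl _)
      · rintro ⟨hb'K, hb'⟩
        exact mem_interAppr hb'K hb'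
end

section
/- Let (K(x)|K,v) be a valued field extension and A := appr_v(x,K). Then A is residue-extending if and only if there exist b, d ∈ K with v(d(x−b)) = 0 and the residue of d(x−b) not lying in Kv. In this case supp A = v(x−K) = {γ ∈ vK : γ ≤ v(x−b)}, and ⋂A is the set of all b ∈ K with v(x−b) = max supp A. -/
variable {L : Type*} [Field L] {Γ : Type*} [AddCommGroup Γ] [LinearOrder Γ] [IsOrderedAddMonoid Γ]

/-- `A = appr_v(x,K)` is residue-extending: `⋂A ≠ ∅` and every `c ∈ K` lies in
`A_γ \ A°_γ` for some `γ` in the support. -/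
def ResidueExtAppr (K : Subfield L) (v : AddValuation L (WithTop Γ)) (x : L) : Prop :=
  (interAppr K v x).Nonempty ∧
  ∀ c ∈ K, ∃ γ ∈ valSet K v,
    (∃ c' ∈ K, γ ≤ v (x - c')) ∧ γ ≤ v (x - c) ∧ ¬ γ < v (x - c)

lemma myCore (K : Subfield L) (v : AddValuation L (WithTop Γ)) (x : L) (hx : x ∉ K)
    {b d : L} (hb : b ∈ K) (hd : d ∈ K) (h0 : v (d * (x - b)) = 0)
    (hres : ¬ residueInK K v (d * (x - b))) :
    v (x - b) ∈ valSet K v ∧ (∀ c ∈ K, v (x - c) ≤ v (x - b)) ∧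
      (∀ c ∈ K, v (x - c) ∈ valSet K v) := by
  have hd0 : d ≠ 0 := by
    rintro rfl
    rw [zero_mul, v.map_zero] at h0
    exact (by simp : (⊤ : WithTop Γ) ≠ 0) h0
  have hdne : v d ≠ ⊤ := v.ne_top_iff.mpr hd0
  have vb : v (x - b) = v d⁻¹ := by
    conv_lhs => rw [← inv_mul_cancel_left₀ hd0 (x - b)]
    rw [v.map_mul, h0, add_zero]
  have hB : ∀ c ∈ K, v (x - c) ≤ v (x - b) := by
    intro c hc
    by_contra h
    rw [not_le] at h
    apply hres
    refine ⟨d * (c - b), K.mul_mem hd (K.sub_mem hc hb), ?_⟩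
    have hrw : d * (x - b) - d * (c - b) = d * (x - c) := by ring
    rw [hrw, v.map_mul]
    calc (0 : WithTop Γ) = v (d * (x - b)) := h0.symm
      _ = v d + v (x - b) := v.map_mul _ _
      _ < v d + v (x - c) := WithTop.add_lt_add_left hdne h
  refine ⟨⟨d⁻¹, K.inv_mem hd, vb.symm⟩, hB, ?_⟩
  intro c hc
  rcases (hB c hc).lt_or_eq with hlt | heq
  · refine ⟨b - c, K.sub_mem hb hc, ?_⟩
    have hrw : b - c = (x - c) - (x - b) := by ring
    rw [hrw]
    exact v.map_sub_eq_of_lt_left hlt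
  · exact ⟨d⁻¹, K.inv_mem hd, by rw [← vb, heq]⟩

lemma myFacts (K : Subfield L) (v : AddValuation L (WithTop Γ)) (x : L) (hx : x ∉ K)
    {b d : L} (hb : b ∈ K) (hd : d ∈ K) (h0 : v (d * (x - b)) = 0)
    (hres : ¬ residueInK K v (d * (x - b))) :
    suppAppr K v x = vxK K v x ∧
      suppAppr K v x = {γ | γ ∈ valSet K v ∧ γ ≤ v (x - b)} ∧
      interAppr K v x = {b' : L | b' ∈ K ∧ v (x - b') = v (x - b)} := by
  obtain ⟨hvbmem, hB, hC⟩ := myCore K v x hx hb hd h0 hres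
  have hxb : x - b ≠ 0 := sub_ne_zero.mpr fun h => hx (h ▸ hb)
  refine ⟨?_, ?_, ?_⟩
  · ext γ
    constructor
    · rintro ⟨⟨e, heK, he⟩, c, hc, hγle⟩
      have hγb : γ ≤ v (x - b) := hγle.trans (hB c hc)
      rcases hγb.lt_or_eq with hlt | heq
      · have he0 : e ≠ 0 := by
          rintro rfl
          rw [v.map_zero] at he
          exact not_top_lt (he ▸ hlt)
        refine ⟨b - e, K.sub_mem hb heK, ?_⟩
        have hrw : x - (b - e) = (x - b) + e := by ring
        rw [hrw, v.map_add_eq_of_lt_right (he ▸ hlt), he]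
      · exact ⟨b, hb, heq.symm⟩
    · rintro ⟨c, hc, rfl⟩
      exact ⟨hC c hc, c, hc, le_rfl⟩
  · ext γ
    exact ⟨fun ⟨hval, c, hc, hle⟩ => ⟨hval, hle.trans (hB c hc)⟩,
      fun ⟨hval, hle⟩ => ⟨hval, b, hb, hle⟩⟩
  · ext b'
    constructor
    · rintro ⟨hb', h1, h2⟩
      refine ⟨hb', le_antisymm (hB b' hb') ?_⟩
      by_contra h
      rw [not_le] at h
      exact lt_irrefl _ (h2 (v (x - b')) (hC b' hb') ⟨b, hb, h⟩)
    · rintro ⟨hb', heq⟩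
      exact ⟨hb', fun γ _ ⟨c, hc, hle⟩ => heq ▸ hle.trans (hB c hc),
        fun γ _ ⟨c, hc, hlt⟩ => heq ▸ hlt.trans_le (hB c hc)⟩

/-- `A := appr_v(x,K)` is residue-extending iff there are `b, d ∈ K` with
`v(d(x−b)) = 0` and the residue of `d(x−b)` not in `Kv`; in that case
`supp A = v(x−K) = {γ ∈ vK : γ ≤ v(x−b)}` and `⋂A` is the set of all `b' ∈ K`
with `v(x−b') = max supp A = v(x−b)`. -/
theorem residueExtAppr_iff (K : Subfield L) (v : AddValuation L (WithTop Γ))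
    (x : L) (hx : x ∉ K) :
    (ResidueExtAppr K v x ↔
      ∃ b ∈ K, ∃ d ∈ K, v (d * (x - b)) = 0 ∧ ¬ residueInK K v (d * (x - b))) ∧
    (∀ b ∈ K, ∀ d ∈ K, v (d * (x - b)) = 0 → ¬ residueInK K v (d * (x - b)) →
      suppAppr K v x = vxK K v x ∧
      suppAppr K v x = {γ | γ ∈ valSet K v ∧ γ ≤ v (x - b)} ∧
      interAppr K v x = {b' : L | b' ∈ K ∧ v (x - b') = v (x - b)}) := by
  constructor
  · constructor
    · rintro ⟨⟨b, hbK, h1, h2⟩, hall⟩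
      have hB' : ∀ c ∈ K, v (x - c) ∈ valSet K v ∧ v (x - c) ≤ v (x - b) := by
        intro c hc
        obtain ⟨γ, hγval, ⟨c', hc', _⟩, hle, hnlt⟩ := hall c hc
        have hγ : γ = v (x - c) := le_antisymm hle (not_lt.mp hnlt)
        exact ⟨hγ ▸ hγval, hγ ▸ h1 γ hγval ⟨c, hc, hγ.le⟩⟩
      obtain ⟨e, heK, he⟩ := (hB' b hbK).1
      have hxb : x - b ≠ 0 := sub_ne_zero.mpr fun h => hx (h ▸ hbK)
      have he0 : e ≠ 0 := by
        rintro rfl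
        rw [v.map_zero] at he
        exact (v.ne_top_iff.mpr hxb) he.symm
      refine ⟨b, hbK, e⁻¹, K.inv_mem heK, ?_, ?_⟩
      · rw [v.map_mul, ← he, ← v.map_mul, inv_mul_cancel₀ he0, v.map_one]
      · rintro ⟨a, haK, hpos⟩
        have hrw : e⁻¹ * (x - b) - a = e⁻¹ * (x - (b + e * a)) := by
          field_simp
          ring
        rw [hrw, v.map_mul] at hpos
        have hle : v (x - (b + e * a)) ≤ v (x - b) :=
          (hB' (b + e * a) (K.add_mem hbK (K.mul_mem heK haK))).2
        have : v e⁻¹ + v (x - (b + e * a)) ≤ 0 := by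
          calc v e⁻¹ + v (x - (b + e * a)) ≤ v e⁻¹ + v (x - b) := add_le_add_right hle _
            _ = v (e⁻¹ * (x - b)) := (v.map_mul _ _).symm
            _ = 0 := by rw [v.map_mul, ← he, ← v.map_mul, inv_mul_cancel₀ he0, v.map_one]
        exact absurd (hpos.trans_le this) (lt_irrefl 0)
    · rintro ⟨b, hb, d, hd, h0, hres⟩
      obtain ⟨hvbmem, hB, hC⟩ := myCore K v x hx hb hd h0 hres
      refine ⟨⟨b, hb, fun γ _ ⟨c, hc, hle⟩ => hle.trans (hB c hc),
        fun γ _ ⟨c, hc, hlt⟩ => hlt.trans_le (hB c hc)⟩, ?_⟩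
      intro c hc
      exact ⟨v (x - c), hC c hc, ⟨c, hc, le_rfl⟩, le_rfl, lt_irrefl _⟩
  · intro b hb d hd h0 hres
    exact myFacts K v x hx hb hd h0 hres
end
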